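/- Let g be a finite-dimensional real Lie algebra equipped with an invariant inner product, i.e. a positive-definite symmetric bilinear form B with B([x,y],z) + B(y,[x,z]) = 0 for all x,y,z ∈ g. Then for every h ∈ g, the Lie subalgebra of g generated by the subspace [g,h] = {[x,h] : x ∈ g} is an ideal of g. -/

import Mathlib

/-- For a finite-dimensional real Lie algebra `g` with an invariant
inner product and any `h ∈ g`, the Lie subalgebra generated by the subspace
`[g,h] = {⁅x,h⁆ | x ∈ g}` is an ideal of `g`. -/
theorem lieSpan_bracket_range_is_ideal
    {L : Type*} [LieRing L] [LieAlgebra ℝ L] [FiniteDimensional ℝ L]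
    (B : L →ₗ[ℝ] L →ₗ[ℝ] ℝ)
    (hsymm : ∀ x y : L, B x y = B y x)
    (hposdef : ∀ v : L, v ≠ 0 → 0 < B v v)
    (hinv : ∀ x y z : L, B ⁅x, y⁆ z + B y ⁅x, z⁆ = 0) :
    ∀ h : L, ∀ x y : L,
      y ∈ LieSubalgebra.lieSpan ℝ L {v : L | ∃ w : L, v = ⁅w, h⁆} →
      ⁅x, y⁆ ∈ LieSubalgebra.lieSpan ℝ L {v : L | ∃ w : L, v = ⁅w, h⁆} := by
  intro h x y hy
  set S : Set L := {v : L | ∃ w : L, v = ⁅w, h⁆} with hS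
  set K := LieSubalgebra.lieSpan ℝ L S with hK
  set f : L →ₗ[ℝ] L := LieAlgebra.ad ℝ L h with hf
  have hfapply : ∀ w : L, f w = ⁅h, w⁆ := fun w => rfl
  -- elements of kernel of ad h act on K
  have key : ∀ c : L, ⁅h, c⁆ = 0 → ∀ z ∈ K, ⁅c, z⁆ ∈ K := by
    intro c hc z hz
    suffices hsuff : z ∈ K ∧ ⁅c, z⁆ ∈ K from hsuff.2
    have hmem : ∀ v ∈ S, v ∈ K ∧ ⁅c, v⁆ ∈ K := by
      rintro v ⟨w, rfl⟩
      refine ⟨LieSubalgebra.subset_lieSpan ⟨w, rfl⟩, ?_⟩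
      have hc' : ⁅c, h⁆ = 0 := by rw [← neg_eq_zero, lie_skew, hc]
      have heq : ⁅c, ⁅w, h⁆⁆ = ⁅⁅c, w⁆, h⁆ := by
        rw [leibniz_lie, hc', lie_zero, add_zero]
      rw [heq]
      exact LieSubalgebra.subset_lieSpan ⟨⁅c, w⁆, rfl⟩
    have hzero : (0 : L) ∈ K ∧ ⁅c, (0 : L)⁆ ∈ K := by simp
    have hsmul : ∀ (r : ℝ), ∀ {a : L}, (a ∈ K ∧ ⁅c, a⁆ ∈ K) → (r • a ∈ K ∧ ⁅c, r • a⁆ ∈ K) := by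
      rintro r a ⟨h1, h2⟩
      exact ⟨K.smul_mem r h1, by rw [lie_smul]; exact K.smul_mem r h2⟩
    have hadd : ∀ a b : L, (a ∈ K ∧ ⁅c, a⁆ ∈ K) → (b ∈ K ∧ ⁅c, b⁆ ∈ K) →
        (a + b ∈ K ∧ ⁅c, a + b⁆ ∈ K) := by
      rintro a b ⟨a1, a2⟩ ⟨b1, b2⟩
      exact ⟨K.add_mem a1 b1, by rw [lie_add]; exact K.add_mem a2 b2⟩
    have hlie : ∀ a b : L, (a ∈ K ∧ ⁅c, a⁆ ∈ K) → (b ∈ K ∧ ⁅c, b⁆ ∈ K) →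
        (⁅a, b⁆ ∈ K ∧ ⁅c, ⁅a, b⁆⁆ ∈ K) := by
      rintro a b ⟨a1, a2⟩ ⟨b1, b2⟩
      refine ⟨K.lie_mem a1 b1, ?_⟩
      rw [leibniz_lie]
      exact K.add_mem (K.lie_mem a2 b1) (K.lie_mem a1 b2)
    exact LieSubalgebra.lieSpan_induction ℝ (p := fun a _ => a ∈ K ∧ ⁅c, a⁆ ∈ K) (fun v hv => hmem v hv) hzero (fun a b _ _ ha hb => hadd a b ha hb) (fun r a _ ha => hsmul r ha) (fun a b _ _ ha hb => hlie a b ha hb) hz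
  -- range and kernel of ad h are disjoint
  have hdisj : Disjoint (LinearMap.range f) (LinearMap.ker f) := by
    rw [Submodule.disjoint_def]
    rintro v ⟨w, rfl⟩ hker
    rw [LinearMap.mem_ker] at hker
    by_contra hne
    have hpos := hposdef _ hne
    have this1 := hinv h w ⁅h, w⁆
    have hz : ⁅h, ⁅h, w⁆⁆ = (0 : L) := hker
    rw [hz] at this1
    simp only [map_zero, add_zero] at this1
    have hpos' : 0 < B ⁅h, w⁆ ⁅h, w⁆ := hpos
    rw [this1] at hpos'
    exact lt_irrefl 0 hpos'
  -- they are complementary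
  have hsup : LinearMap.range f ⊔ LinearMap.ker f = ⊤ := by
    apply Submodule.eq_top_of_finrank_eq
    have h1 := Submodule.finrank_sup_add_finrank_inf_eq (LinearMap.range f) (LinearMap.ker f)
    rw [disjoint_iff.mp hdisj] at h1
    simp only [finrank_bot, add_zero] at h1
    rw [h1, LinearMap.finrank_range_add_finrank_ker]
  -- decompose x
  have hx : x ∈ LinearMap.range f ⊔ LinearMap.ker f := hsup ▸ Submodule.mem_top
  obtain ⟨v, hv, c, hcmem, rfl⟩ := Submodule.mem_sup.mp hx
  obtain ⟨w, rfl⟩ := hv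
  rw [LinearMap.mem_ker] at hcmem
  rw [add_lie]
  refine K.add_mem ?_ (key c hcmem y hy)
  have hvK : f w ∈ K := by
    refine LieSubalgebra.subset_lieSpan ⟨-w, ?_⟩
    rw [hfapply]
    simp
  exact K.lie_mem hvK hy
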